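/- Let s, t > 0 and let G(z) = (z - √(z² - 4s))/(2s) be the Cauchy transform of the semicircular law of variance s, with the branch as above. Set J_t(z) = z - tG(z) and H_t(z) = z + tG(z), so J_t(z) = 2z - H_t(z). For q ∈ ℝ with |q| ≤ 2√(s+t) and z_q = ((2s+t)q + it√(4(s+t) - q²))/(2(s+t)), one has J_t(z_q) = (sq + it√(4(s+t) - q²))/(s+t). In particular, as q ranges over [-2√(s+t), 2√(s+t)], J_t(z_q) traces the upper half of the ellipse with semi-axes 2s/√(s+t) (horizontal) and 2t/√(s+t) (vertical). -/

import Mathlib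

open Filter

open Complex

noncomputable def csq (σ : ℝ) (w : ℂ) : ℂ :=
  ((Real.sqrt ((‖w‖ + w.re)/2) : ℝ) : ℂ)
    + ((σ * Real.sqrt ((‖w‖ - w.re)/2) : ℝ) : ℂ) * Complex.I

lemma csq_cont (σ : ℝ) : Continuous (csq σ) := by
  have habs : Continuous (fun w : ℂ => ‖w‖) := continuous_norm
  unfold csq
  apply Continuous.add
  · exact Complex.continuous_ofReal.comp
      (Real.continuous_sqrt.comp ((habs.add Complex.continuous_re).div_const 2))
  · exact (Complex.continuous_ofReal.comp
      ((continuous_const.mul (Real.continuous_sqrt.comp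
        ((habs.sub Complex.continuous_re).div_const 2))))).mul continuous_const

lemma csq_sq (σ : ℝ) (hσ : σ = 1 ∨ σ = -1) (w : ℂ) (him : 0 ≤ σ * w.im) :
    (csq σ w)^2 = w := by
  have h1 : |w.re| ≤ ‖w‖ := Complex.abs_re_le_norm w
  have h2 : 0 ≤ ‖w‖ + w.re := by cases abs_le.mp h1; linarith
  have h3 : 0 ≤ ‖w‖ - w.re := by cases abs_le.mp h1; linarith
  set a := Real.sqrt ((‖w‖ + w.re)/2) with ha
  set b := Real.sqrt ((‖w‖ - w.re)/2) with hb
  have ha2 : a^2 = (‖w‖ + w.re)/2 := Real.sq_sqrt (by linarith)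
  have hb2 : b^2 = (‖w‖ - w.re)/2 := Real.sq_sqrt (by linarith)
  have hab : a * b = |w.im| / 2 := by
    rw [ha, hb, ← Real.sqrt_mul (by linarith)]
    have key : (‖w‖ + w.re)/2 * ((‖w‖ - w.re)/2)
        = (|w.im|/2)^2 := by
      have h4 := Complex.sq_norm w
      have h5 := Complex.normSq_apply w
      have h6 : |w.im|^2 = w.im^2 := _root_.sq_abs w.im
      nlinarith
    rw [key]
    exact Real.sqrt_sq (by positivity)
  have him' : σ * |w.im| = w.im := by
    rcases hσ with h | h <;> subst h
    · rw [one_mul, _root_.abs_of_nonneg (by linarith)]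
    · rw [_root_.abs_of_nonpos (by linarith)]; ring
  have expand : (csq σ w)^2 = ((a^2 - (σ*b)^2 : ℝ) : ℂ) + ((2*a*(σ*b) : ℝ) : ℂ) * Complex.I := by
    unfold csq
    rw [← ha, ← hb]
    apply Complex.ext <;>
      simp [pow_two, Complex.mul_re, Complex.mul_im] <;> ring
  rw [expand]
  have hσ2 : σ^2 = 1 := by rcases hσ with h | h <;> subst h <;> norm_num
  have e1 : a^2 - (σ*b)^2 = w.re := by nlinarith
  have e2 : 2*a*(σ*b) = w.im := by
    have h6 : 2*a*(σ*b) = σ * (2 * (a*b)) := by ring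
    rw [h6, hab]
    rw [show 2*(|w.im|/2) = |w.im| by ring]
    exact him'
  rw [e1, e2, Complex.re_add_im]

lemma csq_of_sq (σ : ℝ) (hσ : σ = 1 ∨ σ = -1) (w : ℂ)
    (ha : 0 ≤ σ * w.re) (hb : 0 ≤ w.im) :
    csq σ (w^2) = (σ : ℂ) * w := by
  have hre : (w^2).re = w.re^2 - w.im^2 := by simp [pow_two, Complex.mul_re]
  have him : (w^2).im = 2 * w.re * w.im := by simp [pow_two, Complex.mul_im]; ring
  have habs : ‖w^2‖ = w.re^2 + w.im^2 := by
    rw [norm_pow, Complex.sq_norm, Complex.normSq_apply]; ring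
  have hu : Real.sqrt ((‖w^2‖ + (w^2).re)/2) = σ * w.re := by
    rw [habs, hre, show (w.re^2 + w.im^2 + (w.re^2 - w.im^2))/2 = w.re^2 by ring,
      show w.re^2 = (σ * w.re)^2 by rcases hσ with h | h <;> subst h <;> ring]
    exact Real.sqrt_sq ha
  have hv : Real.sqrt ((‖w^2‖ - (w^2).re)/2) = w.im := by
    rw [habs, hre, show (w.re^2 + w.im^2 - (w.re^2 - w.im^2))/2 = w.im^2 by ring]
    exact Real.sqrt_sq hb
  unfold csq
  rw [hu, hv]
  apply Complex.ext <;> simp [Complex.mul_re, Complex.mul_im]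

lemma branch (s : ℝ) (hs : 0 < s)
    (sq : ℂ → ℂ)
    (hsq_sq : ∀ z : ℂ, 0 ≤ z.im → sq z ^ 2 = z ^ 2 - 4 * (s : ℂ))
    (hsq_cont : ContinuousOn sq {z : ℂ | 0 ≤ z.im})
    (hsq_asymp : Tendsto (fun z => sq z / z)
      (comap (fun z : ℂ => ‖z‖) atTop ⊓ Filter.principal {z : ℂ | 0 ≤ z.im}) (nhds 1))
    (σ : ℝ) (hσ : σ = 1 ∨ σ = -1)
    (z₀ : ℂ) (him0 : 0 ≤ z₀.im) (hsgn : 0 ≤ σ * z₀.re)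
    (hne : ∀ y : ℝ, 0 ≤ y → (z₀ + (y:ℂ) * Complex.I)^2 - 4*(s:ℂ) ≠ 0) :
    sq z₀ = (σ : ℂ) * csq σ (z₀^2 - 4*(s:ℂ)) := by
  have hσc : (σ : ℂ) ≠ 0 := by rcases hσ with h | h <;> subst h <;> norm_num
  set f : ℝ → ℂ := fun y => z₀ + (y:ℂ) * Complex.I with hf
  have hf_re : ∀ y, (f y).re = z₀.re := by intro y; simp [hf]
  have hf_im : ∀ y, (f y).im = z₀.im + y := by intro y; simp [hf]
  set x : ℝ := z₀.re with hx
  set Y : ℝ → ℝ := fun y => z₀.im + y with hY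
  set w : ℝ → ℂ := fun y => (f y)^2 - 4*(s:ℂ) with hw
  have hw_re : ∀ y, (w y).re = x^2 - (Y y)^2 - 4*s := by
    intro y; simp [hw, pow_two, Complex.mul_re, hf_re, hf_im, hx, hY]
  have hw_im : ∀ y, (w y).im = 2 * x * Y y := by
    intro y; simp [hw, pow_two, Complex.mul_im, hf_re, hf_im, hx, hY]; ring
  have hwim_sgn : ∀ y, 0 ≤ y → 0 ≤ σ * (w y).im := by
    intro y hy
    rw [hw_im]
    have : σ * (2 * x * Y y) = 2 * (σ * x) * (Y y) := by ring
    rw [this]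
    have : 0 ≤ Y y := by simp only [hY]; linarith
    positivity
  have hfim : ∀ y, 0 ≤ y → 0 ≤ (f y).im := by
    intro y hy; rw [hf_im]; linarith
  have hcsq_sq : ∀ y, 0 ≤ y → (csq σ (w y))^2 = w y := fun y hy =>
    csq_sq σ hσ (w y) (hwim_sgn y hy)
  have hwne : ∀ y, 0 ≤ y → w y ≠ 0 := by
    intro y hy
    simpa [hw] using hne y hy
  have hcsq_ne : ∀ y, 0 ≤ y → csq σ (w y) ≠ 0 := by
    intro y hy h0
    exact hwne y hy (by rw [← hcsq_sq y hy, h0]; ring)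
  have hsq_f : ∀ y, 0 ≤ y → (sq (f y))^2 = w y := fun y hy =>
    hsq_sq (f y) (hfim y hy)
  set g : ℝ → ℂ := fun y => sq (f y) / csq σ (w y) with hg
  -- g takes values in {1, -1}
  have hg_pm : ∀ y, 0 ≤ y → g y = 1 ∨ g y = -1 := by
    intro y hy
    have h2 : (g y)^2 = 1 := by
      rw [hg]; simp only
      rw [div_pow, hsq_f y hy, hcsq_sq y hy, div_self (hwne y hy)]
    have : (g y - 1) * (g y + 1) = 0 := by linear_combination h2
    rcases mul_eq_zero.mp this with h | h
    · left; linear_combination h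
    · right; linear_combination h
  -- g is continuous on Ici 0
  have hf_cont : Continuous f := by fun_prop
  have hg_cont : ContinuousOn g (Set.Ici 0) := by
    apply ContinuousOn.div
    · exact hsq_cont.comp hf_cont.continuousOn (fun y hy => hfim y hy)
    · exact ((csq_cont σ).comp (by fun_prop : Continuous w)).continuousOn
    · exact fun y hy => hcsq_ne y hy
  -- g is constant on Ici 0
  have hg_const : ∀ y, 0 ≤ y → g y = g 0 := by
    intro y hy
    by_contra hnc
    have h0 := hg_pm 0 le_rfl
    have hy' := hg_pm y hy
    have hcont : ContinuousOn (fun u => (g u).re) (Set.Icc 0 y) :=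
      Complex.continuous_re.comp_continuousOn (hg_cont.mono Set.Icc_subset_Ici_self)
    have key : ∃ u ∈ Set.Icc (0:ℝ) y, (g u).re = 0 := by
      rcases h0 with h0 | h0 <;> rcases hy' with hy' | hy'
      · exact absurd (hy'.trans h0.symm) hnc
      · have h00 : (0:ℝ) ∈ Set.Icc ((g y).re) ((g 0).re) := by
          rw [h0, hy']; norm_num
        obtain ⟨u, hu, hu0⟩ := intermediate_value_Icc' hy hcont h00
        exact ⟨u, hu, hu0⟩
      · have h00 : (0:ℝ) ∈ Set.Icc ((g 0).re) ((g y).re) := by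
          rw [h0, hy']; norm_num
        obtain ⟨u, hu, hu0⟩ := intermediate_value_Icc hy hcont h00
        exact ⟨u, hu, hu0⟩
      · exact absurd (hy'.trans h0.symm) hnc
    obtain ⟨u, hu, hu0⟩ := key
    rcases hg_pm u hu.1 with h | h <;> rw [h] at hu0 <;> norm_num at hu0
  -- the ray escapes to infinity
  have habs_top : Tendsto (fun y => ‖f y‖) atTop atTop := by
    apply tendsto_atTop_mono' atTop ?_ (tendsto_atTop_add_const_right atTop (-(‖z₀‖)) tendsto_id)
    filter_upwards [eventually_ge_atTop (0:ℝ)] with y hy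
    have h3 : (y:ℂ)*Complex.I = f y - z₀ := by rw [hf]; ring
    have h2 : ‖(y:ℂ)*Complex.I‖ ≤ ‖f y‖ + ‖z₀‖ := by
      rw [h3]
      exact norm_sub_le _ _
    have h4 : ‖(y:ℂ)*Complex.I‖ = |y| := by
      rw [norm_mul, Complex.norm_I, Complex.norm_real, Real.norm_eq_abs, mul_one]
    rw [h4, _root_.abs_of_nonneg hy] at h2
    simp only [id_eq]
    linarith
  have hfne : ∀ᶠ y in atTop, f y ≠ 0 := by
    filter_upwards [habs_top.eventually_gt_atTop 0] with y hy
    intro h0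
    rw [h0] at hy; simp at hy
  have hT0 : Tendsto f atTop (comap (fun z : ℂ => ‖z‖) atTop ⊓ Filter.principal {z : ℂ | 0 ≤ z.im}) := by
    refine tendsto_inf.mpr ⟨tendsto_comap_iff.mpr habs_top, tendsto_principal.mpr ?_⟩
    filter_upwards [eventually_ge_atTop (0:ℝ)] with y hy
    exact hfim y hy
  have hT1 : Tendsto (fun y => sq (f y) / f y) atTop (nhds 1) := hsq_asymp.comp hT0
  -- Y tends to infinity
  have hY_top : Tendsto Y atTop atTop := tendsto_atTop_add_const_left atTop z₀.im tendsto_id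
  have hYpos : ∀ᶠ y in atTop, 0 < Y y := hY_top.eventually_gt_atTop 0
  have hY2_inv : Tendsto (fun y => ((Y y)^2)⁻¹) atTop (nhds 0) := by
    apply Tendsto.inv_tendsto_atTop
    have := hY_top.atTop_mul_atTop₀ hY_top
    apply this.congr
    intro y; rw [pow_two]
  have hYinv : Tendsto (fun y => (Y y)⁻¹) atTop (nhds 0) := hY_top.inv_tendsto_atTop
  -- re (w y) / Y² → -1
  have hr1 : Tendsto (fun y => (w y).re / (Y y)^2) atTop (nhds (-1)) := by
    have h : Tendsto (fun y => (x^2 - 4*s) * ((Y y)^2)⁻¹ - 1) atTop (nhds ((x^2-4*s) * 0 - 1)) :=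
      (tendsto_const_nhds.mul hY2_inv).sub tendsto_const_nhds
    rw [show (x^2-4*s) * 0 - 1 = (-1:ℝ) by ring] at h
    apply h.congr'
    filter_upwards [hYpos] with y hYy
    rw [hw_re]
    field_simp
    ring
  -- im (w y) / Y² → 0
  have hr0 : Tendsto (fun y => (w y).im / (Y y)^2) atTop (nhds 0) := by
    have h : Tendsto (fun y => (2*x) * (Y y)⁻¹) atTop (nhds ((2*x) * 0)) :=
      tendsto_const_nhds.mul hYinv
    rw [show (2*x) * 0 = (0:ℝ) by ring] at h
    apply h.congr'
    filter_upwards [hYpos] with y hYy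
    rw [hw_im]
    field_simp
  -- abs (w y) / Y² → 1
  have hr2 : Tendsto (fun y => ‖w y‖ / (Y y)^2) atTop (nhds 1) := by
    have hin : Tendsto (fun y => ((w y).re/(Y y)^2)^2 + ((w y).im/(Y y)^2)^2) atTop
        (nhds ((-1:ℝ)^2 + 0^2)) := (hr1.pow 2).add (hr0.pow 2)
    have hsqrt : Tendsto (fun y => Real.sqrt (((w y).re/(Y y)^2)^2 + ((w y).im/(Y y)^2)^2))
        atTop (nhds (Real.sqrt ((-1:ℝ)^2 + 0^2))) :=
      (Real.continuous_sqrt.continuousAt).tendsto.comp hin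
    rw [show Real.sqrt ((-1:ℝ)^2 + 0^2) = 1 by norm_num] at hsqrt
    apply hsqrt.congr'
    filter_upwards [hYpos] with y hYy
    have h1 : ((w y).re/(Y y)^2)^2 + ((w y).im/(Y y)^2)^2
        = ((w y).re^2 + (w y).im^2) * (((Y y)^2)⁻¹)^2 := by
      field_simp
    rw [h1, Real.sqrt_mul (by positivity), Real.sqrt_sq (by positivity)]
    rw [div_eq_mul_inv]
    congr 1
    rw [Complex.norm_def, Complex.normSq_apply]
    ring_nf
  -- u y / Y y → 0 and v y / Y y → 1
  have hkey : ∀ (c : ℝ), (c = 1 ∨ c = -1) → ∀ (L : ℝ), Tendsto (fun y => (‖w y‖ + c * (w y).re)/(Y y)^2) atTop (nhds L) →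
      Tendsto (fun y => Real.sqrt ((‖w y‖ + c * (w y).re)/2) / Y y) atTop (nhds (Real.sqrt (L/2))) := by
    intro c hc L hL
    have hin : Tendsto (fun y => ((‖w y‖ + c * (w y).re)/(Y y)^2)/2) atTop (nhds (L/2)) :=
      hL.div_const 2
    have hsqrt := (Real.continuous_sqrt.continuousAt).tendsto.comp hin
    apply hsqrt.congr'
    filter_upwards [hYpos] with y hYy
    simp only [Function.comp]
    have habs_nonneg : |(w y).re| ≤ ‖w y‖ := Complex.abs_re_le_norm (w y)
    have hnum_nonneg : 0 ≤ ‖w y‖ + c * (w y).re := by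
      rcases abs_le.mp habs_nonneg with ⟨hl, hr⟩
      rcases hc with h | h <;> subst h <;> linarith
    rw [show (‖w y‖ + c * (w y).re)/(Y y)^2/2
        = (‖w y‖ + c * (w y).re)/2 * (((Y y))⁻¹)^2 by
      rw [inv_pow, ← div_eq_mul_inv, div_div, div_div]; ring]
    rw [Real.sqrt_mul (by linarith : (0:ℝ) ≤ (‖w y‖ + c * (w y).re)/2),
      Real.sqrt_sq (by positivity)]
    exact (div_eq_mul_inv _ _).symm
  -- combine to get the numerator limits
  have hA : Tendsto (fun y => (‖w y‖ + 1 * (w y).re)/(Y y)^2) atTop (nhds 0) := by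
    have h := hr2.add hr1
    rw [show (1:ℝ) + -1 = 0 by norm_num] at h
    apply h.congr
    intro y; rw [one_mul, add_div]
  have hB : Tendsto (fun y => (‖w y‖ + (-1) * (w y).re)/(Y y)^2) atTop (nhds 2) := by
    have h := hr2.sub hr1
    rw [show (1:ℝ) - -1 = 2 by norm_num] at h
    apply h.congr
    intro y; rw [neg_one_mul, ← sub_eq_add_neg, sub_div]
  have hu' := hkey 1 (Or.inl rfl) 0 hA
  have hv' := hkey (-1) (Or.inr rfl) 2 hB
  rw [show ((0:ℝ)/2) = 0 by norm_num, Real.sqrt_zero] at hu'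
  rw [show ((2:ℝ)/2) = 1 by norm_num, Real.sqrt_one] at hv'
  have hu'' : Tendsto (fun y => Real.sqrt ((‖w y‖ + (w y).re)/2) / Y y) atTop (nhds 0) := by
    apply hu'.congr; intro y; rw [one_mul]
  have hv'' : Tendsto (fun y => Real.sqrt ((‖w y‖ - (w y).re)/2) / Y y) atTop (nhds 1) := by
    apply hv'.congr; intro y; rw [neg_one_mul, ← sub_eq_add_neg]
  -- the limit of csq σ (w y) / f y
  have hnum : Tendsto (fun y => ((Real.sqrt ((‖w y‖ + (w y).re)/2) / Y y : ℝ) : ℂ)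
      + ((σ * (Real.sqrt ((‖w y‖ - (w y).re)/2) / Y y) : ℝ) : ℂ) * Complex.I) atTop
      (nhds (((0:ℝ):ℂ) + ((σ * 1 : ℝ):ℂ) * Complex.I)) := by
    apply Tendsto.add
    · exact (Complex.continuous_ofReal.tendsto _).comp hu''
    · exact ((Complex.continuous_ofReal.tendsto _).comp
        (tendsto_const_nhds.mul hv'')).mul tendsto_const_nhds
  have hden : Tendsto (fun y => ((x / Y y : ℝ):ℂ) + Complex.I) atTop
      (nhds (((0:ℝ):ℂ) + Complex.I)) := by
    have h0 : Tendsto (fun y => x / Y y) atTop (nhds 0) := by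
      have h := (tendsto_const_nhds : Tendsto (fun _ : ℝ => x) atTop (nhds x)).mul hYinv
      rw [mul_zero] at h
      apply h.congr; intro y; rw [div_eq_mul_inv]
    exact ((Complex.continuous_ofReal.tendsto _).comp h0).add tendsto_const_nhds
  have hdenne : (((0:ℝ):ℂ) + Complex.I) ≠ 0 := by
    intro h
    have := congrArg Complex.im h
    simp at this
  have hdiv := hnum.div hden hdenne
  have hval : ((((0:ℝ):ℂ) + ((σ*1:ℝ):ℂ)*Complex.I) / (((0:ℝ):ℂ) + Complex.I)) = ((σ:ℝ):ℂ) := by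
    push_cast
    rw [zero_add, zero_add, mul_one, mul_div_assoc, div_self Complex.I_ne_zero, mul_one]
  rw [hval] at hdiv
  have hT2 : Tendsto (fun y => csq σ (w y) / f y) atTop (nhds ((σ:ℝ):ℂ)) := by
    apply hdiv.congr'
    filter_upwards [hYpos, hfne] with y hYy hfy
    have hYne : ((Y y : ℝ):ℂ) ≠ 0 := by exact_mod_cast hYy.ne'
    have hfy_eq : f y = ((x:ℝ):ℂ) + ((Y y:ℝ):ℂ) * Complex.I := by
      apply Complex.ext <;> simp [hf_re, hf_im, hx, hY]
    have hbne : ((x / Y y : ℝ):ℂ) + Complex.I ≠ 0 := by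
      intro h
      have := congrArg Complex.im h
      simp at this
    have hfne2 : ((x:ℝ):ℂ) + ((Y y:ℝ):ℂ) * Complex.I ≠ 0 := by
      rw [← hfy_eq]; exact hfy
    simp only [Pi.div_apply]
    rw [hfy_eq]
    unfold csq
    push_cast
    rw [div_eq_div_iff (by push_cast at hbne; exact hbne) hfne2]
    field_simp [hYne]
    try ring
    try exact Or.inl trivial
  -- conclude: g tends to 1/σ
  have hglim : Tendsto g atTop (nhds (1 / ((σ:ℝ):ℂ))) := by
    have h := hT1.div hT2 hσc
    apply h.congr'
    filter_upwards [hfne, eventually_ge_atTop (0:ℝ)] with y hfy hy0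
    rw [hg]; simp only
    have hcne := hcsq_ne y hy0
    simp only [Pi.div_apply]
    field_simp
  have hgc : Tendsto g atTop (nhds (g 0)) := by
    apply tendsto_const_nhds.congr'
    filter_upwards [eventually_ge_atTop (0:ℝ)] with y hy
    exact (hg_const y hy).symm
  have hg0 : g 0 = 1 / ((σ:ℝ):ℂ) := tendsto_nhds_unique hgc hglim
  have hσinv : (1:ℂ) / ((σ:ℝ):ℂ) = ((σ:ℝ):ℂ) := by
    rcases hσ with h|h <;> subst h <;> norm_num
  have hf0 : f 0 = z₀ := by rw [hf]; simp
  have hw0 : w 0 = z₀^2 - 4*(s:ℂ) := by rw [hw]; simp only [hf0]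
  have hc0 : csq σ (z₀^2 - 4*(s:ℂ)) ≠ 0 := by
    have h := hcsq_ne 0 le_rfl; rwa [hw0] at h
  have hdone : sq z₀ / csq σ (z₀^2 - 4*(s:ℂ)) = ((σ:ℝ):ℂ) := by
    have h := hg0.trans hσinv
    rw [hg] at h; simp only at h
    rwa [hf0, hw0] at h
  rw [← hdone, div_mul_cancel₀ _ hc0]

lemma real_pair_eq_zero {r1 r2 : ℝ} (h : (r1:ℂ) + (r2:ℂ)*Complex.I = 0) : r1 = 0 ∧ r2 = 0 := by
  rw [Complex.ext_iff] at h
  simpa using h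


set_option maxHeartbeats 1000000 in
/-- With `G` the Cauchy transform of the semicircular law of variance `s`
(branch of `√(z²-4s)` on the closed upper half-plane as in Statement 10) and
`J_t(z) = z - tG(z)`, for `|q| ≤ 2√(s+t)` and
`z_q = ((2s+t)q + it√(4(s+t)-q²))/(2(s+t))` one has
`J_t(z_q) = (sq + it√(4(s+t)-q²))/(s+t)`, and this point lies on the ellipse with
semi-axes `2s/√(s+t)` and `2t/√(s+t)`. -/
theorem stmt_11 (s t : ℝ) (hs : 0 < s) (ht : 0 < t)
    (sq : ℂ → ℂ)
    (hsq_sq : ∀ z : ℂ, 0 ≤ z.im → sq z ^ 2 = z ^ 2 - 4 * (s : ℂ))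
    (hsq_cont : ContinuousOn sq {z : ℂ | 0 ≤ z.im})
    (hsq_asymp : Tendsto (fun z => sq z / z)
      (comap (fun z : ℂ => ‖z‖) atTop ⊓ Filter.principal {z : ℂ | 0 ≤ z.im}) (nhds 1))
    (q : ℝ) (hq : |q| ≤ 2 * Real.sqrt (s + t)) :
    ∀ w : ℂ,
      w = (fun z : ℂ => z - (t : ℂ) * ((z - sq z) / (2 * (s : ℂ))))
        ((((2 * s + t) * q : ℝ) : ℂ) / (2 * ((s : ℂ) + t))
          + Complex.I * ((t * Real.sqrt (4 * (s + t) - q ^ 2) : ℝ) : ℂ) / (2 * ((s : ℂ) + t))) →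
      w = ((s * q : ℝ) : ℂ) / ((s : ℂ) + t)
            + Complex.I * ((t * Real.sqrt (4 * (s + t) - q ^ 2) : ℝ) : ℂ) / ((s : ℂ) + t) ∧
      (w.re / (2 * s / Real.sqrt (s + t))) ^ 2
        + (w.im / (2 * t / Real.sqrt (s + t))) ^ 2 = 1 := by
  intro w hw
  have hS : 0 < s + t := by linarith
  have hSne : (s + t) ≠ 0 := hS.ne'
  have hSC : ((s:ℂ) + t) ≠ 0 := by
    intro h
    have := congrArg Complex.re h
    push_cast at this
    simp at this
    linarith
  have hD : 0 ≤ 4 * (s + t) - q ^ 2 := by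
    nlinarith [Real.sq_sqrt hS.le, _root_.sq_abs q, abs_nonneg q]
  set rd : ℝ := Real.sqrt (4 * (s + t) - q ^ 2) with hrd_def
  have hrd0 : 0 ≤ rd := Real.sqrt_nonneg _
  have hrd2 : rd ^ 2 = 4 * (s + t) - q ^ 2 := Real.sq_sqrt hD
  set a : ℝ := (2*s+t)*q/(2*(s+t)) with ha_def
  set b : ℝ := t*rd/(2*(s+t)) with hb_def
  set c : ℝ := t*q/(2*(s+t)) with hc_def
  set d : ℝ := (2*s+t)*rd/(2*(s+t)) with hd_def
  set z₀ : ℂ := (a:ℂ) + (b:ℂ) * Complex.I with hz0_def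
  set w₀ : ℂ := (c:ℂ) + (d:ℂ) * Complex.I with hw0_def
  -- the given point equals z₀
  have hzq : (((2 * s + t) * q : ℝ) : ℂ) / (2 * ((s : ℂ) + t))
      + Complex.I * ((t * rd : ℝ) : ℂ) / (2 * ((s : ℂ) + t)) = z₀ := by
    rw [hz0_def, ha_def, hb_def]
    push_cast
    field_simp
  have hσdef : ∃ σ : ℝ, (σ = 1 ∨ σ = -1) ∧ 0 ≤ σ * q := by
    rcases le_or_gt 0 q with h | h
    · exact ⟨1, Or.inl rfl, by linarith⟩
    · exact ⟨-1, Or.inr rfl, by nlinarith⟩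
  obtain ⟨σ, hσ, hσq⟩ := hσdef
  have hz0re : z₀.re = a := by simp [hz0_def]
  have hz0im : z₀.im = b := by simp [hz0_def]
  have him0 : 0 ≤ z₀.im := by rw [hz0im, hb_def]; positivity
  have hsgn : 0 ≤ σ * z₀.re := by
    rw [hz0re, ha_def]
    rw [show σ * ((2*s+t)*q/(2*(s+t))) = (σ*q) * ((2*s+t)/(2*(s+t))) by ring]
    have h1 : 0 ≤ (2*s+t)/(2*(s+t)) := by positivity
    exact mul_nonneg hσq h1
  -- nonvanishing along the vertical ray
  have hne : ∀ y : ℝ, 0 ≤ y → (z₀ + (y:ℂ) * Complex.I)^2 - 4*(s:ℂ) ≠ 0 := by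
    intro y hy h0
    have hexp : (z₀ + (y:ℂ) * Complex.I)^2 - 4*(s:ℂ)
        = ((a^2 - (b+y)^2 - 4*s : ℝ):ℂ) + ((2*a*(b+y) : ℝ):ℂ) * Complex.I := by
      rw [hz0_def]
      apply Complex.ext <;>
        simp [pow_two, Complex.mul_re, Complex.mul_im] <;> ring
    rw [hexp] at h0
    obtain ⟨hre, him⟩ := real_pair_eq_zero h0
    have hby : 0 ≤ b + y := by
      have : 0 ≤ b := by rw [hb_def]; positivity
      linarith
    rcases mul_eq_zero.mp him with h1 | h1
    · have haz : a = 0 := by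
        rcases mul_eq_zero.mp h1 with h2 | h2
        · norm_num at h2
        · exact h2
      rw [haz] at hre
      nlinarith [sq_nonneg (b+y)]
    · -- b + y = 0, so b = 0, y = 0, rd = 0, q² = 4(s+t)
      have hb0 : b = 0 := by
        have : 0 ≤ b := by rw [hb_def]; positivity
        linarith
      have hrd0' : rd = 0 := by
        rw [hb_def] at hb0
        have h2 : t * rd = 0 := by
          rcases div_eq_zero_iff.mp hb0 with h | h
          · exact h
          · exfalso; nlinarith
        rcases mul_eq_zero.mp h2 with h | h
        · exact absurd h ht.ne'
        · exact h
      have hq2 : q^2 = 4*(s+t) := by nlinarith [hrd2, hrd0']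
      rw [h1] at hre
      have ha2 : a^2 * (4*(s+t)^2) = (2*s+t)^2 * q^2 := by
        rw [ha_def]; field_simp; ring
      have h3 : a^2 = 4*s := by nlinarith [hre]
      have h4 : (4*s) * (4*(s+t)^2) = (2*s+t)^2 * (4*(s+t)) := by
        rw [← h3, ha2, hq2]
      nlinarith [h4, mul_pos (mul_pos ht ht) hS]
  -- apply the branch lemma
  have hbr := branch s hs sq hsq_sq hsq_cont hsq_asymp σ hσ z₀ him0 hsgn hne
  -- z₀² - 4s = w₀²
  have hrdC : ((rd:ℝ):ℂ)^2 = 4*((s:ℂ)+t) - ((q:ℝ):ℂ)^2 := by exact_mod_cast hrd2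
  have hkey : z₀^2 - 4*(s:ℂ) = w₀^2 := by
    have hre' : a^2 - b^2 - 4*s = c^2 - d^2 := by
      rw [ha_def, hb_def, hc_def, hd_def]
      field_simp
      nlinarith [hrd2]
    have him' : a*b = c*d := by
      rw [ha_def, hb_def, hc_def, hd_def]
      field_simp
    apply Complex.ext <;>
      simp [hz0_def, hw0_def, pow_two, Complex.mul_re, Complex.mul_im] <;>
      nlinarith [hre', him']
  -- sign properties of w₀
  have hw0re : w₀.re = c := by simp [hw0_def]
  have hw0im : w₀.im = d := by simp [hw0_def]
  have hsgnw : 0 ≤ σ * w₀.re := by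
    rw [hw0re, hc_def]
    rw [show σ * (t*q/(2*(s+t))) = (σ*q) * (t/(2*(s+t))) by ring]
    exact mul_nonneg hσq (by positivity)
  have himw : 0 ≤ w₀.im := by rw [hw0im, hd_def]; positivity
  have hcsqw : csq σ (w₀^2) = (σ:ℂ) * w₀ := csq_of_sq σ hσ w₀ hsgnw himw
  have hσσ : ((σ:ℝ):ℂ) * ((σ:ℝ):ℂ) = 1 := by
    rcases hσ with h | h <;> subst h <;> norm_num
  have hsqz : sq z₀ = w₀ := by
    rw [hbr, hkey, hcsqw, ← mul_assoc, hσσ, one_mul]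
  -- compute w
  rw [hzq] at hw
  simp only at hw
  rw [hsqz] at hw
  have hsC : ((s:ℂ)) ≠ 0 := by exact_mod_cast hs.ne'
  have htarget : w = ((s * q : ℝ) : ℂ) / ((s : ℂ) + t)
      + Complex.I * ((t * rd : ℝ) : ℂ) / ((s : ℂ) + t) := by
    rw [hw, hz0_def, hw0_def, ha_def, hb_def, hc_def, hd_def]
    push_cast
    field_simp
    ring
  refine ⟨htarget, ?_⟩
  have htarget2 : w = ((s*q/(s+t) : ℝ):ℂ) + ((t*rd/(s+t) : ℝ):ℂ) * Complex.I := by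
    rw [htarget]; push_cast; field_simp
  have hwre : w.re = s*q/(s+t) := by
    rw [htarget2]
    simp only [Complex.add_re, Complex.ofReal_re, Complex.mul_re, Complex.ofReal_im,
      Complex.I_re, Complex.I_im]
    ring
  have hwim : w.im = t*rd/(s+t) := by
    rw [htarget2]
    simp only [Complex.add_im, Complex.ofReal_im, Complex.mul_im, Complex.ofReal_re,
      Complex.I_re, Complex.I_im]
    ring
  rw [hwre, hwim]
  have hsqrtS : Real.sqrt (s+t) ^ 2 = s + t := Real.sq_sqrt hS.le
  have hsqrtSpos : 0 < Real.sqrt (s+t) := Real.sqrt_pos.mpr hS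
  field_simp
  linear_combination (q^2+rd^2) * hsqrtS + (s+t) * hrd2
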